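/- The double integral ∫_ℝ ∫_ℝ |ψ̂(ω₂)|² |ψ̂(ω₃)|² · |ω₂−ω₃|^{β−1} · |ω₃|^{β−1} · |ω₂|^{β−1} dω₃ dω₂ is finite. -/

import Mathlib

open MeasureTheory Filter

/-- Fourier transform `ψ̂(λ) = ∫ e^{-iλt} ψ(t) dt`. -/
noncomputable def fhat (ψ : ℝ → ℝ) (l : ℝ) : ℂ :=
  ∫ t : ℝ, Complex.exp (-(Complex.I * (l : ℂ) * (t : ℂ))) * (ψ t : ℂ)

open Set Real

private lemma exp_abs_int {b : ℝ} (hb : 0 < b) :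
    Integrable (fun x : ℝ => Real.exp (-b * |x|)) := by
  have h0 : IntegrableOn (fun x : ℝ => Real.exp (-b * x)) (Ioi (0:ℝ)) :=
    exp_neg_integrableOn_Ioi 0 hb
  have h1 : IntegrableOn (fun x : ℝ => Real.exp (-b * |x|)) (Ioi (0:ℝ)) := by
    apply h0.congr_fun ?_ measurableSet_Ioi
    intro x hx; simp [abs_of_pos (show (0:ℝ) < x from hx)]
  rw [← integrableOn_univ, ← @Iio_union_Ici _ _ (0 : ℝ), integrableOn_union,
    integrableOn_Ici_iff_integrableOn_Ioi]
  refine ⟨?_, h1⟩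
  rw [← (Measure.measurePreserving_neg (volume : Measure ℝ)).integrableOn_comp_preimage
      (Homeomorph.neg ℝ).measurableEmbedding]
  simp only [Function.comp_def, neg_preimage, neg_Iio, neg_zero, abs_neg]
  exact h1

private lemma rpow_exp_bound {c b : ℝ} (hc : 0 < c) (hb : 0 < b) :
    ∃ D : ℝ, 0 < D ∧ ∀ t : ℝ, 0 ≤ t → t ^ c * Real.exp (-b * t) ≤ D := by
  set n := ⌈c⌉₊ with hn
  refine ⟨max 1 ((Nat.factorial n : ℝ) / b ^ n), lt_of_lt_of_le one_pos (le_max_left _ _), ?_⟩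
  intro t ht
  have hexp : Real.exp (-b * t) ≤ 1 := by
    apply Real.exp_le_one_iff.mpr; nlinarith
  rcases le_total t 1 with h1 | h1
  · have h2 : t ^ c ≤ 1 := Real.rpow_le_one ht h1 hc.le
    calc t ^ c * Real.exp (-b * t) ≤ 1 * 1 :=
          mul_le_mul h2 hexp (Real.exp_pos _).le zero_le_one
      _ ≤ _ := by simpa using le_max_left _ _
  · have h2 : t ^ c ≤ t ^ (n : ℝ) :=
      Real.rpow_le_rpow_of_exponent_le h1 (Nat.le_ceil c)
    have h3 : (b * t) ^ n / (Nat.factorial n : ℝ) ≤ Real.exp (b * t) :=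
      Real.pow_div_factorial_le_exp (x := b * t) (mul_nonneg hb.le ht) n
    have h4 : t ^ n ≤ (Nat.factorial n : ℝ) / b ^ n * Real.exp (b * t) := by
      rw [mul_pow] at h3
      have hbn : (0:ℝ) < b ^ n := pow_pos hb n
      have hfn : (0:ℝ) < (Nat.factorial n : ℝ) := by positivity
      rw [div_le_iff₀ hfn] at h3
      rw [div_mul_eq_mul_div, le_div_iff₀ hbn]
      nlinarith [h3]
    have h5 : t ^ c * Real.exp (-b * t) ≤ (Nat.factorial n : ℝ) / b ^ n := by
      have he : Real.exp (b * t) * Real.exp (-b * t) = 1 := by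
        rw [← Real.exp_add]; ring_nf; exact Real.exp_zero
      calc t ^ c * Real.exp (-b * t) ≤ t ^ (n:ℝ) * Real.exp (-b * t) :=
            mul_le_mul_of_nonneg_right h2 (Real.exp_pos _).le
        _ = t ^ n * Real.exp (-b * t) := by rw [Real.rpow_natCast]
        _ ≤ ((Nat.factorial n : ℝ) / b ^ n * Real.exp (b * t)) * Real.exp (-b * t) :=
            mul_le_mul_of_nonneg_right h4 (Real.exp_pos _).le
        _ = (Nat.factorial n : ℝ) / b ^ n := by rw [mul_assoc, he, mul_one]
    exact h5.trans (le_max_right _ _)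

private lemma G_integrable {s : ℝ} (hs : -1 < s) :
    Integrable (Set.indicator (Set.Icc (-1:ℝ) 1) (fun u => |u| ^ s)) := by
  rw [integrable_indicator_iff measurableSet_Icc]
  have hIcc : IntegrableOn (fun u : ℝ => |u| ^ s) (Icc (0:ℝ) 1) := by
    have h := intervalIntegral.intervalIntegrable_rpow' (a := 0) (b := 1) hs
    rw [intervalIntegrable_iff_integrableOn_Ioc_of_le zero_le_one] at h
    rw [integrableOn_Icc_iff_integrableOn_Ioc]
    apply h.congr_fun ?_ measurableSet_Ioc
    intro x hx; simp [abs_of_pos hx.1]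
  have hneg : IntegrableOn (fun u : ℝ => |u| ^ s) (Icc (-1:ℝ) 0) := by
    rw [← (Measure.measurePreserving_neg (volume : Measure ℝ)).integrableOn_comp_preimage
        (Homeomorph.neg ℝ).measurableEmbedding]
    simp only [Function.comp_def, neg_preimage, neg_Icc, neg_zero, neg_neg, abs_neg]
    exact hIcc
  have : Icc (-1:ℝ) 1 = Icc (-1:ℝ) 0 ∪ Icc 0 1 :=
    (Set.Icc_union_Icc_eq_Icc (by norm_num) (by norm_num)).symm
  rw [this]
  exact hneg.union hIcc

theorem stmt_12
    (β : ℝ) (hβ : β ∈ Set.Ioo (0 : ℝ) 1)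
    (ψ : ℝ → ℝ) (hψ_int : Integrable ψ) (hψ_sq : Integrable (fun t => (ψ t) ^ 2))
    (hψ_zero : (∫ t : ℝ, ψ t) = 0)
    (α K κ : ℝ) (hα : 1 ≤ α) (hK : 0 < K) (hκ : 0 < κ)
    (Cψ : ℝ → ℂ) (hCψ_cont : Continuous Cψ)
    (hCψ0 : 0 < (Cψ 0).re ∧ (Cψ 0).im = 0)
    (hCψ_bdd : ∀ l : ℝ, ‖Cψ l‖ ≤ K * Real.exp (-κ * |l|))
    (hhat : ∀ l : ℝ, fhat ψ l = Cψ l * ((|l| ^ α : ℝ) : ℂ)) :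
    Integrable (fun p : ℝ × ℝ =>
      ‖fhat ψ p.1‖ ^ 2 * ‖fhat ψ p.2‖ ^ 2 *
        |p.1 - p.2| ^ (β - 1) * |p.2| ^ (β - 1) * |p.1| ^ (β - 1))
      (volume : Measure (ℝ × ℝ)) := by
  obtain ⟨hβ0, hβ1⟩ := hβ
  set c : ℝ := 2 * α + (β - 1) with hc_def
  have hc : 0 < c := by simp only [hc_def]; linarith
  obtain ⟨D, hD, hDle⟩ := rpow_exp_bound hc hκ
  set E : ℝ → ℝ := fun x => Real.exp (-κ * |x|) with hE_def
  set G : ℝ → ℝ := Set.indicator (Set.Icc (-1:ℝ) 1) (fun u => |u| ^ (β - 1)) with hG_def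
  have hE_int : Integrable E := exp_abs_int hκ
  have hG_int : Integrable G := G_integrable (by linarith)
  have hE_cont : Continuous E := by
    simp only [hE_def]; fun_prop
  have hE_pos : ∀ x, 0 < E x := fun x => Real.exp_pos _
  have hE_le_one : ∀ x, E x ≤ 1 := by
    intro x
    apply Real.exp_le_one_iff.mpr
    have := abs_nonneg x; nlinarith
  have hG_nonneg : ∀ u, 0 ≤ G u :=
    fun u => Set.indicator_nonneg (fun x _ => Real.rpow_nonneg (abs_nonneg x) _) u
  have hG_meas : Measurable G := by
    apply Measurable.indicator ?_ measurableSet_Icc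
    fun_prop
  -- the key one-variable estimate
  have hfab : ∀ l, ‖fhat ψ l‖ = ‖Cψ l‖ * |l| ^ α := by
    intro l
    rw [hhat, norm_mul, Complex.norm_real, Real.norm_eq_abs, abs_of_nonneg (Real.rpow_nonneg (abs_nonneg l) α)]
  have key : ∀ x : ℝ, (‖Cψ x‖ * |x| ^ α) ^ 2 * |x| ^ (β - 1)
      ≤ K ^ 2 * D * E x := by
    intro x
    have hr : (|x| ^ α) ^ 2 * |x| ^ (β - 1) = |x| ^ c := by
      rcases eq_or_ne x 0 with rfl | hx
      · rw [abs_zero, Real.zero_rpow (by positivity : α ≠ 0), Real.zero_rpow hc.ne']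
        simp
      · have h0 : (0:ℝ) < |x| := abs_pos.mpr hx
        rw [← Real.rpow_natCast (|x| ^ α) 2, ← Real.rpow_mul h0.le, ← Real.rpow_add h0]
        congr 1
        push_cast
        rw [hc_def]; ring
    have hb1 : ‖Cψ x‖ * |x| ^ α ≤ K * E x * |x| ^ α :=
      mul_le_mul_of_nonneg_right (hCψ_bdd x) (Real.rpow_nonneg (abs_nonneg x) α)
    have hsq : (‖Cψ x‖ * |x| ^ α) ^ 2 ≤ (K * E x * |x| ^ α) ^ 2 :=
      pow_le_pow_left₀ (by positivity) hb1 2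
    have h1 : (‖Cψ x‖ * |x| ^ α) ^ 2 * |x| ^ (β - 1)
        ≤ (K * E x * |x| ^ α) ^ 2 * |x| ^ (β - 1) :=
      mul_le_mul_of_nonneg_right hsq (Real.rpow_nonneg (abs_nonneg x) _)
    have h2 : (K * E x * |x| ^ α) ^ 2 * |x| ^ (β - 1)
        = K ^ 2 * (E x * ((|x| ^ α) ^ 2 * |x| ^ (β - 1) * E x)) := by ring
    have h3 : |x| ^ c * E x ≤ D := hDle |x| (abs_nonneg x)
    have h4 : K ^ 2 * (E x * (|x| ^ c * E x)) ≤ K ^ 2 * (E x * D) := by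
      apply mul_le_mul_of_nonneg_left ?_ (by positivity : (0:ℝ) ≤ K ^ 2)
      exact mul_le_mul_of_nonneg_left h3 (hE_pos x).le
    calc (‖Cψ x‖ * |x| ^ α) ^ 2 * |x| ^ (β - 1)
        ≤ (K * E x * |x| ^ α) ^ 2 * |x| ^ (β - 1) := h1
      _ = K ^ 2 * (E x * ((|x| ^ α) ^ 2 * |x| ^ (β - 1) * E x)) := h2
      _ = K ^ 2 * (E x * (|x| ^ c * E x)) := by rw [hr]
      _ ≤ K ^ 2 * (E x * D) := h4
      _ = K ^ 2 * D * E x := by ring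
  have hG_bd : ∀ u : ℝ, |u| ^ (β - 1) ≤ G u + 1 := by
    intro u
    rcases le_or_gt |u| 1 with h | h
    · have hmem : u ∈ Set.Icc (-1:ℝ) 1 := by
        rcases abs_le.mp h with ⟨h1, h2⟩; exact ⟨h1, h2⟩
      rw [hG_def, Set.indicator_of_mem hmem]
      linarith
    · have h1 : |u| ^ (β - 1) ≤ 1 :=
        Real.rpow_le_one_of_one_le_of_nonpos h.le (by linarith)
      linarith [hG_nonneg u]
  -- the integrable majorant
  have hEE : Integrable (fun p : ℝ × ℝ => E p.1 * E p.2) := by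
    rw [show (volume : Measure (ℝ × ℝ)) = (volume : Measure ℝ).prod volume from
      (Measure.volume_eq_prod _ _)]
    exact hE_int.mul_prod hE_int
  have hGneg_int : Integrable (fun v : ℝ => G (-v)) := hG_int.comp_neg
  have hQ_int : Integrable (fun z : ℝ × ℝ => E z.1 * E (z.2 + z.1) * G (-z.2)) := by
    have hbound : Integrable (fun z : ℝ × ℝ => E z.1 * G (-z.2)) := by
      rw [show (volume : Measure (ℝ × ℝ)) = (volume : Measure ℝ).prod volume from
        (Measure.volume_eq_prod _ _)]
      exact hE_int.mul_prod hGneg_int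
    apply Integrable.mono' hbound
    · apply Measurable.aestronglyMeasurable
      exact ((hE_cont.comp continuous_fst).mul
        (hE_cont.comp (continuous_snd.add continuous_fst))).measurable.mul
        (hG_meas.comp measurable_snd.neg)
    · filter_upwards with z
      rw [Real.norm_eq_abs, abs_of_nonneg (mul_nonneg
        (mul_nonneg (hE_pos _).le (hE_pos _).le) (hG_nonneg _))]
      calc E z.1 * E (z.2 + z.1) * G (-z.2) ≤ E z.1 * 1 * G (-z.2) := by
            apply mul_le_mul_of_nonneg_right ?_ (hG_nonneg _)
            exact mul_le_mul_of_nonneg_left (hE_le_one _) (hE_pos _).le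
        _ = E z.1 * G (-z.2) := by ring
  have hmp : MeasurePreserving (fun z : ℝ × ℝ => (z.1, z.2 - z.1))
      (volume : Measure (ℝ × ℝ)) (volume : Measure (ℝ × ℝ)) := by
    rw [show (volume : Measure (ℝ × ℝ)) = (volume : Measure ℝ).prod volume from
      (Measure.volume_eq_prod _ _)]
    exact measurePreserving_prod_sub volume volume
  have hP_int : Integrable (fun p : ℝ × ℝ => E p.1 * E p.2 * G (p.1 - p.2)) := by
    have h := (hmp.integrable_comp hQ_int.aestronglyMeasurable).mpr hQ_int
    have heq : ((fun z : ℝ × ℝ => E z.1 * E (z.2 + z.1) * G (-z.2)) ∘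
        (fun z : ℝ × ℝ => (z.1, z.2 - z.1)))
        = fun p : ℝ × ℝ => E p.1 * E p.2 * G (p.1 - p.2) := by
      funext p
      simp only [Function.comp_apply, sub_add_cancel, neg_sub]
    rwa [heq] at h
  set Bnd : ℝ × ℝ → ℝ := fun p =>
    (K ^ 2 * D) * (K ^ 2 * D) *
      (E p.1 * E p.2 * G (p.1 - p.2) + E p.1 * E p.2) with hBnd_def
  have hBnd_int : Integrable Bnd := (hP_int.add hEE).const_mul _
  apply Integrable.mono' hBnd_int
  · apply Measurable.aestronglyMeasurable
    have heq : (fun p : ℝ × ℝ =>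
        ‖fhat ψ p.1‖ ^ 2 * ‖fhat ψ p.2‖ ^ 2 *
          |p.1 - p.2| ^ (β - 1) * |p.2| ^ (β - 1) * |p.1| ^ (β - 1))
        = fun p : ℝ × ℝ =>
          (‖Cψ p.1‖ * |p.1| ^ α) ^ 2 * (‖Cψ p.2‖ * |p.2| ^ α) ^ 2 *
          |p.1 - p.2| ^ (β - 1) * |p.2| ^ (β - 1) * |p.1| ^ (β - 1) := by
      funext p; rw [hfab, hfab]
    rw [heq]
    have hA : Continuous fun l : ℝ => ‖Cψ l‖ * |l| ^ α :=
      (continuous_norm.comp hCψ_cont).mul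
        (continuous_abs.rpow_const (fun x => Or.inr (by linarith)))
    have m1 : Measurable fun p : ℝ × ℝ => |p.1 - p.2| ^ (β - 1) := by fun_prop
    have m2 : Measurable fun p : ℝ × ℝ => |p.2| ^ (β - 1) := by fun_prop
    have m3 : Measurable fun p : ℝ × ℝ => |p.1| ^ (β - 1) := by fun_prop
    exact (((((hA.comp continuous_fst).pow 2).mul
      ((hA.comp continuous_snd).pow 2)).measurable.mul m1).mul m2).mul m3
  · filter_upwards with p
    set x := p.1
    set y := p.2
    have hnn : 0 ≤ ‖fhat ψ x‖ ^ 2 * ‖fhat ψ y‖ ^ 2 *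
        |x - y| ^ (β - 1) * |y| ^ (β - 1) * |x| ^ (β - 1) := by positivity
    rw [Real.norm_eq_abs, abs_of_nonneg hnn]
    rw [hfab, hfab]
    have hre : (‖Cψ x‖ * |x| ^ α) ^ 2 * (‖Cψ y‖ * |y| ^ α) ^ 2 *
        |x - y| ^ (β - 1) * |y| ^ (β - 1) * |x| ^ (β - 1)
        = ((‖Cψ x‖ * |x| ^ α) ^ 2 * |x| ^ (β - 1)) *
          ((‖Cψ y‖ * |y| ^ α) ^ 2 * |y| ^ (β - 1)) *
          |x - y| ^ (β - 1) := by ring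
    rw [hre]
    have hstep : ((‖Cψ x‖ * |x| ^ α) ^ 2 * |x| ^ (β - 1)) *
          ((‖Cψ y‖ * |y| ^ α) ^ 2 * |y| ^ (β - 1)) *
          |x - y| ^ (β - 1)
        ≤ (K ^ 2 * D * E x) * (K ^ 2 * D * E y) * (G (x - y) + 1) := by
      have hx1 : 0 ≤ (‖Cψ y‖ * |y| ^ α) ^ 2 * |y| ^ (β - 1) := by positivity
      have hKDE : (0:ℝ) ≤ K ^ 2 * D * E x :=
        mul_nonneg (mul_nonneg (by positivity) hD.le) (hE_pos x).le
      have hKDE' : (0:ℝ) ≤ K ^ 2 * D * E y :=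
        mul_nonneg (mul_nonneg (by positivity) hD.le) (hE_pos y).le
      have h12 : ((‖Cψ x‖ * |x| ^ α) ^ 2 * |x| ^ (β - 1)) *
          ((‖Cψ y‖ * |y| ^ α) ^ 2 * |y| ^ (β - 1))
          ≤ (K ^ 2 * D * E x) * (K ^ 2 * D * E y) :=
        mul_le_mul (key x) (key y) hx1 hKDE
      exact mul_le_mul h12 (hG_bd (x - y)) (Real.rpow_nonneg (abs_nonneg _) _)
        (mul_nonneg hKDE hKDE')
    apply hstep.trans_eq
    simp only [hBnd_def]
    ring
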